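/- Let k, n be positive integers, let P_k be a homogeneous polynomial of degree k in n variables with complex coefficients, and let M_ℝ := max_{θ ∈ S^{n-1}} |P_k(θ)|, where S^{n-1} is the unit sphere in ℝ^n. Then for every homogeneous polynomial f_m of degree m in n variables, ‖P_k f_m‖_rF ≤ M_ℝ √(I_{2m+2k+n-1}/I_{2m+n-1}) ‖f_m‖_rF. In particular, for fixed k and n there exists a constant D_{k,n} > 0 such that ‖P_k f_m‖_rF ≤ D_{k,n} M_ℝ √((1+m)^k) ‖f_m‖_rF for every m and every homogeneous polynomial f_m of degree m. -/

import Mathlib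

open MvPolynomial MeasureTheory Filter Matrix

noncomputable section

/-- Evaluation of a complex-coefficient polynomial at a real point of `ℝⁿ`. -/
def evalR {n : ℕ} (P : MvPolynomial (Fin n) ℂ) (x : Fin n → ℝ) : ℂ :=
  MvPolynomial.eval (fun i => (x i : ℂ)) P

/-- The real Fischer inner product `⟨f,g⟩_rF = ∫_{ℝⁿ} f(x) conj (g(x)) e^{-|x|²} dx`. -/
def rFInner {n : ℕ} (f g : MvPolynomial (Fin n) ℂ) : ℂ :=
  ∫ x : Fin n → ℝ, evalR f x * (starRingEnd ℂ) (evalR g x) * Real.exp (-(∑ i, x i ^ 2))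

/-- The real Fischer norm `‖f‖_rF = ⟨f,f⟩_rF^{1/2}`. -/
def rFNorm {n : ℕ} (f : MvPolynomial (Fin n) ℂ) : ℝ :=
  Real.sqrt (∫ x : Fin n → ℝ, ‖evalR f x‖ ^ 2 * Real.exp (-(∑ i, x i ^ 2)))

/-- The (complex) Fischer inner product `⟨f,g⟩_F = ∑_α α! c_α conj(d_α)`. -/
def FInner {n : ℕ} (f g : MvPolynomial (Fin n) ℂ) : ℂ :=
  ∑ α ∈ f.support ∪ g.support,
    (∏ i, ((α i).factorial : ℂ)) * MvPolynomial.coeff α f *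
      (starRingEnd ℂ) (MvPolynomial.coeff α g)

/-- The (complex) Fischer norm. -/
def FNorm {n : ℕ} (f : MvPolynomial (Fin n) ℂ) : ℝ :=
  Real.sqrt (FInner f f).re

/-- The Laplace operator `Δ = ∑ ∂²/∂xⱼ²` on polynomials. -/
def lapP {n : ℕ} (f : MvPolynomial (Fin n) ℂ) : MvPolynomial (Fin n) ℂ :=
  ∑ i, MvPolynomial.pderiv i (MvPolynomial.pderiv i f)

/-- The differential operator `D^α = ∂^{|α|}/∂x^α` on polynomials. -/
def DP {n : ℕ} (α : Fin n → ℕ) (f : MvPolynomial (Fin n) ℂ) : MvPolynomial (Fin n) ℂ :=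
  (List.finRange n).foldl (fun g i => (fun h => MvPolynomial.pderiv i h)^[α i] g) f

/-- The constant coefficient operator `Q(D)` associated to a polynomial `Q = ∑ c_β x^β`. -/
def QD {n : ℕ} (Q f : MvPolynomial (Fin n) ℂ) : MvPolynomial (Fin n) ℂ :=
  ∑ β ∈ Q.support, MvPolynomial.coeff β Q • DP (fun i => β i) f

/-- The polynomial `|x|² = x₁² + ⋯ + xₙ²`. -/
def radSq (n : ℕ) : MvPolynomial (Fin n) ℂ :=
  ∑ i : Fin n, (MvPolynomial.X i) ^ 2

/-- `Ii m = ∫₀^∞ e^{-r²} r^m dr`. -/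
def Ii (m : ℕ) : ℝ := ∫ r in Set.Ioi (0 : ℝ), Real.exp (-r ^ 2) * r ^ m

/-- `e_{p,m} = 2^p p! (2m+n)(2m+n+2)⋯(2m+n+2(p-1))` (for `n` variables). -/
def epm (n p m : ℕ) : ℕ :=
  2 ^ p * Nat.factorial p * ∏ i ∈ Finset.range p, (2 * m + n + 2 * i)

/-- The partial derivative `∂/∂xᵢ` of a function on `ℝⁿ`. -/
def pdF {n : ℕ} (i : Fin n) (f : (Fin n → ℝ) → ℂ) : (Fin n → ℝ) → ℂ :=
  fun x => fderiv ℝ f x (Pi.single i 1)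

/-- The differential operator `D^α` on functions on `ℝⁿ`. -/
def DF {n : ℕ} (α : Fin n → ℕ) (f : (Fin n → ℝ) → ℂ) : (Fin n → ℝ) → ℂ :=
  (List.finRange n).foldl (fun g i => (pdF i)^[α i] g) f

/-- The Laplace operator `Δ` on functions on `ℝⁿ`. -/
def lapF {n : ℕ} (f : (Fin n → ℝ) → ℂ) : (Fin n → ℝ) → ℂ :=
  fun x => ∑ i, pdF i (pdF i f) x

/-- The open euclidean ball `B_R = {x ∈ ℝⁿ : |x| < R}`. -/
def euclBall (n : ℕ) (R : ℝ) : Set (Fin n → ℝ) := {x | ∑ i, x i ^ 2 < R ^ 2}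

/-- The homogeneous part of degree `m` of the Taylor series of `f` at `0`:
`f_m(x) = ∑_{|α|=m} (1/α!) (∂^α f)(0) x^α`. -/
def homPart {n : ℕ} (f : (Fin n → ℝ) → ℂ) (m : ℕ) (x : Fin n → ℝ) : ℂ :=
  ∑ α ∈ Finset.Nat.antidiagonalTuple n m,
    (∏ i, ((α i).factorial : ℂ))⁻¹ * DF α f 0 * ∏ i, (x i : ℂ) ^ (α i)

/-- Membership in `A(B_R)`: infinitely differentiable on `B_R`, and the homogeneous Taylor
series converges absolutely and uniformly to `f` on every compact subset of `B_R`. -/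
def MemA (n : ℕ) (R : ℝ) (f : (Fin n → ℝ) → ℂ) : Prop :=
  ContDiffOn ℝ ⊤ f (euclBall n R) ∧
  ∀ K : Set (Fin n → ℝ), K ⊆ euclBall n R → IsCompact K →
    TendstoUniformlyOn (fun N x => ∑ m ∈ Finset.range N, homPart f m x) f atTop K ∧
    ∃ g : (Fin n → ℝ) → ℝ,
      TendstoUniformlyOn (fun N x => ∑ m ∈ Finset.range N, ‖homPart f m x‖)
        g atTop K

/-- The operator `Q(D)` on functions on `ℝⁿ`. -/
def QDF {n : ℕ} (Q : MvPolynomial (Fin n) ℂ) (u : (Fin n → ℝ) → ℂ) : (Fin n → ℝ) → ℂ :=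
  fun x => ∑ β ∈ Q.support, MvPolynomial.coeff β Q * DF (fun i => β i) u x

/-- The operator `L = Δ^p + ∑_{|α| ≤ k₀} a_α(x) D^α` on functions on `ℝⁿ`. -/
def Lop {n : ℕ} (p k₀ : ℕ) (a : (Fin n → ℕ) → (Fin n → ℝ) → ℂ)
    (u : (Fin n → ℝ) → ℂ) : (Fin n → ℝ) → ℂ :=
  fun x => (lapF^[p] u) x +
    ∑ l ∈ Finset.range (k₀ + 1), ∑ α ∈ Finset.Nat.antidiagonalTuple n l, a α x * DF α u x

/-- The operator `L = Q(D) + ∑_{|α| ≤ k₀} a_α(x) D^α` on functions on `ℝⁿ`. -/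
def LopQ {n : ℕ} (Q : MvPolynomial (Fin n) ℂ) (k₀ : ℕ) (a : (Fin n → ℕ) → (Fin n → ℝ) → ℂ)
    (u : (Fin n → ℝ) → ℂ) : (Fin n → ℝ) → ℂ :=
  fun x => QDF Q u x +
    ∑ l ∈ Finset.range (k₀ + 1), ∑ α ∈ Finset.Nat.antidiagonalTuple n l, a α x * DF α u x

/-- The complex partial derivative `∂/∂zᵢ` of a function on `ℂⁿ`. -/
def pdC {n : ℕ} (i : Fin n) (f : (Fin n → ℂ) → ℂ) : (Fin n → ℂ) → ℂ :=
  fun z => fderiv ℂ f z (Pi.single i 1)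

/-- The differential operator `D^α` on functions on `ℂⁿ`. -/
def DFc {n : ℕ} (α : Fin n → ℕ) (f : (Fin n → ℂ) → ℂ) : (Fin n → ℂ) → ℂ :=
  (List.finRange n).foldl (fun g i => (pdC i)^[α i] g) f

/-- The operator `B(D) = ∑_{i,j} B_{ij} ∂_i ∂_j` on functions on `ℂⁿ`, for the quadratic
form `B(ζ) = ζᵗBζ`. -/
def BDop {n : ℕ} (B : Matrix (Fin n) (Fin n) ℂ) (f : (Fin n → ℂ) → ℂ) :
    (Fin n → ℂ) → ℂ :=
  fun z => ∑ i, ∑ j, B i j * pdC i (pdC j f) z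

/-- The operator `L = (B(D))^p + ∑_{|α| ≤ p} a_α(z) D^α` on functions on `ℂⁿ`. -/
def LC {n : ℕ} (B : Matrix (Fin n) (Fin n) ℂ) (p : ℕ)
    (a : (Fin n → ℕ) → (Fin n → ℂ) → ℂ) (u : (Fin n → ℂ) → ℂ) : (Fin n → ℂ) → ℂ :=
  fun z => ((BDop B)^[p] u) z +
    ∑ l ∈ Finset.range (p + 1), ∑ α ∈ Finset.Nat.antidiagonalTuple n l, a α z * DFc α u z

end


open MeasureTheory Filter Set MvPolynomial

noncomputable section StmtAux

lemma Ii_eq_gamma (m : ℕ) : Ii m = (1/2) * Real.Gamma ((m+1)/2) := by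
  rw [Ii, ← integral_rpow_mul_exp_neg_rpow (p := 2) (q := m) two_pos
    (by have := Nat.cast_nonneg (α := ℝ) m; linarith)]
  refine setIntegral_congr_fun measurableSet_Ioi (fun x hx => ?_)
  rw [Real.rpow_natCast, Real.rpow_two, mul_comm]

lemma Ii_pos (m : ℕ) : 0 < Ii m := by
  rw [Ii_eq_gamma]
  have := Real.Gamma_pos_of_pos (show (0:ℝ) < ((m:ℝ)+1)/2 by positivity)
  positivity

lemma Ii_step (m : ℕ) : Ii (m + 2) = (((m:ℝ) + 1)/2) * Ii m := by
  rw [Ii_eq_gamma, Ii_eq_gamma]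
  have h : ((((m:ℕ)+2 : ℕ) :ℝ)+1)/2 = ((m:ℝ)+1)/2 + 1 := by push_cast; ring
  rw [h, Real.Gamma_add_one (by positivity)]
  ring

def G (b : ℕ) : ℝ := ∫ t : ℝ, t ^ b * Real.exp (-t ^ 2)

lemma integrable_pow_exp (b : ℕ) : Integrable fun t : ℝ => t ^ b * Real.exp (-t ^ 2) := by
  have := integrable_rpow_mul_exp_neg_mul_sq (b := 1) one_pos (s := b)
    (by have := Nat.cast_nonneg (α := ℝ) b; linarith)
  simpa [Real.rpow_natCast, neg_mul, one_mul] using this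

lemma G_eq (b : ℕ) : G b = (1 + (-1:ℝ)^b) * Ii b := by
  have hint := integrable_pow_exp b
  have h1 : ∫ t in Set.Iic (0:ℝ), t ^ b * Real.exp (-t ^ 2) = (-1:ℝ)^b * Ii b := by
    rw [← neg_zero, ← integral_comp_neg_Ioi, Ii, ← integral_const_mul]
    refine setIntegral_congr_fun measurableSet_Ioi (fun x hx => ?_)
    rw [neg_pow, neg_sq]; ring
  have h2 : ∫ t in Set.Ioi (0:ℝ), t ^ b * Real.exp (-t ^ 2) = Ii b := by
    rw [Ii]
    exact setIntegral_congr_fun measurableSet_Ioi (fun x hx => mul_comm _ _)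
  have := intervalIntegral.integral_Iic_add_Ioi (b := (0:ℝ)) hint.integrableOn hint.integrableOn
  rw [G, ← this, h1, h2]; ring

lemma G_step (b : ℕ) : G (b + 2) = (((b:ℝ) + 1)/2) * G b := by
  rw [G_eq, G_eq, Ii_step]
  have : (-1:ℝ)^(b+2) = (-1:ℝ)^b := by rw [pow_add]; ring
  rw [this]; ring


variable {n : ℕ}

variable {n : ℕ}

def monF (α : Fin n → ℕ) : (Fin n → ℝ) → ℂ :=
  fun x => (∏ i, (x i : ℂ) ^ α i) * Real.exp (-(∑ i, x i ^ 2))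

lemma monF_eq (α : Fin n → ℕ) (x : Fin n → ℝ) :
    monF α x = ∏ i, (((x i ^ α i * Real.exp (-(x i) ^ 2) : ℝ)) : ℂ) := by
  simp only [monF, Complex.ofReal_mul, Complex.ofReal_pow, Finset.prod_mul_distrib]
  congr 1
  rw [← Complex.ofReal_prod, ← Real.exp_sum]
  congr 2
  rw [← Finset.sum_neg_distrib]

lemma integrable_monF (α : Fin n → ℕ) : Integrable (monF α) := by
  have : Integrable (fun x : Fin n → ℝ =>
      ∏ i, (fun t : ℝ => ((t ^ α i * Real.exp (-t ^ 2) : ℝ) : ℂ)) (x i)) :=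
    Integrable.fintype_prod (fun i => (integrable_pow_exp (α i)).ofReal)
  refine this.congr (Eventually.of_forall fun x => ?_)
  exact (monF_eq α x).symm

lemma integral_monF (α : Fin n → ℕ) : ∫ x, monF α x = ∏ i, (G (α i) : ℂ) := by
  calc ∫ x, monF α x
      = ∫ x : Fin n → ℝ, ∏ i, (fun t : ℝ => ((t ^ α i * Real.exp (-t ^ 2) : ℝ) : ℂ)) (x i) := by
        exact integral_congr_ae (Eventually.of_forall fun x => monF_eq α x)
    _ = ∏ i, ∫ t : ℝ, ((t ^ α i * Real.exp (-t ^ 2) : ℝ) : ℂ) :=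
        integral_fintype_prod_eq_prod
          (fun i (t : ℝ) => ((t ^ α i * Real.exp (-t ^ 2) : ℝ) : ℂ))
    _ = ∏ i, (G (α i) : ℂ) := by
        refine Finset.prod_congr rfl fun i _ => ?_
        rw [show (fun t : ℝ => ((t ^ α i * Real.exp (-t ^ 2) : ℝ) : ℂ)) =
          (fun t : ℝ => ((((fun s : ℝ => s ^ α i * Real.exp (-s ^ 2)) t) : ℝ) : ℂ)) from rfl]
        exact integral_ofReal

def Ig (g : MvPolynomial (Fin n) ℂ) : ℂ :=
  ∫ x : Fin n → ℝ, evalR g x * Real.exp (-(∑ i, x i ^ 2))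

lemma evalR_exp_eq_sum (g : MvPolynomial (Fin n) ℂ) (x : Fin n → ℝ) :
    evalR g x * Real.exp (-(∑ i, x i ^ 2)) =
      ∑ α ∈ g.support, MvPolynomial.coeff α g * monF (fun i => α i) x := by
  rw [evalR, eval_eq', Finset.sum_mul]
  exact Finset.sum_congr rfl fun α _ => by rw [monF, mul_assoc]

lemma integrable_evalR_exp (g : MvPolynomial (Fin n) ℂ) :
    Integrable (fun x : Fin n → ℝ => evalR g x * Real.exp (-(∑ i, x i ^ 2))) := by
  have : Integrable (fun x : Fin n → ℝ =>
      ∑ α ∈ g.support, MvPolynomial.coeff α g * monF (fun i => α i) x) :=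
    integrable_finset_sum _ (fun α _ => (integrable_monF _).const_mul _)
  exact this.congr (Eventually.of_forall fun x => (evalR_exp_eq_sum g x).symm)

lemma Ig_eq (g : MvPolynomial (Fin n) ℂ) :
    Ig g = ∑ α ∈ g.support, MvPolynomial.coeff α g * ∏ i, (G (α i) : ℂ) := by
  rw [Ig]
  rw [integral_congr_ae (Eventually.of_forall fun x => evalR_exp_eq_sum g x)]
  rw [integral_finset_sum _ (fun α _ => (integrable_monF _).const_mul _)]
  exact Finset.sum_congr rfl fun α _ => by rw [integral_const_mul, integral_monF]

lemma Ig_monomial (α : Fin n →₀ ℕ) (c : ℂ) :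
    Ig (monomial α c) = c * ∏ i, (G (α i) : ℂ) := by
  rcases eq_or_ne c 0 with rfl | hc
  · simp [Ig_eq]
  · rw [Ig_eq, support_monomial, if_neg hc, Finset.sum_singleton, coeff_monomial, if_pos rfl]



lemma sum_eq_of_homog {g : MvPolynomial (Fin n) ℂ} {d : ℕ} (hg : g.IsHomogeneous d)
    {α : Fin n →₀ ℕ} (hα : α ∈ g.support) : ∑ i, α i = d := by
  have h := hg (mem_support_iff.mp hα)
  replace h : Finsupp.degree α = d := by rw [Finsupp.degree_eq_weight_one]; exact h
  rw [← h, Finsupp.degree_apply]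
  exact (Finset.sum_subset (Finset.subset_univ _)
    (fun i _ hi => Finsupp.notMem_support_iff.mp hi)).symm

lemma Ig_sum {ι : Type*} (s : Finset ι) (h : ι → MvPolynomial (Fin n) ℂ) :
    Ig (∑ a ∈ s, h a) = ∑ a ∈ s, Ig (h a) := by
  rw [Ig]
  have hcong : ∀ x : Fin n → ℝ, evalR (∑ a ∈ s, h a) x * (Real.exp (-(∑ i, x i ^ 2)) : ℂ)
      = ∑ a ∈ s, evalR (h a) x * (Real.exp (-(∑ i, x i ^ 2)) : ℂ) := by
    intro x
    rw [evalR, _root_.map_sum, Finset.sum_mul]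
    rfl
  rw [integral_congr_ae (Eventually.of_forall hcong)]
  rw [integral_finset_sum _ (fun a _ => integrable_evalR_exp (h a))]
  rfl

lemma G_step' (b : ℕ) : ((G (b + 2) : ℝ) : ℂ) = (((b : ℂ) + 1)/2) * G b := by
  rw [G_step b]
  push_cast
  ring

lemma Ig_radSq_monomial (α : Fin n →₀ ℕ) (c : ℂ) :
    Ig (radSq n * monomial α c) =
      ((((∑ i, α i : ℕ) : ℂ) + n)/2) * Ig (monomial α c) := by
  have expand : radSq n * monomial α c
      = ∑ i : Fin n, monomial (Finsupp.single i 2 + α) c := by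
    rw [radSq, Finset.sum_mul]
    refine Finset.sum_congr rfl fun i _ => ?_
    rw [X_pow_eq_monomial, monomial_mul, one_mul]
  rw [expand, Ig_sum]
  have key : ∀ i : Fin n, Ig (monomial (Finsupp.single i 2 + α) c)
      = (((α i : ℂ) + 1)/2) * (c * ∏ j, (G (α j) : ℂ)) := by
    intro i
    rw [Ig_monomial]
    have h1 : ∏ j, (G (((Finsupp.single i 2 + α) : Fin n →₀ ℕ) j) : ℂ)
        = (G (α i + 2) : ℂ) * ∏ j ∈ Finset.univ.erase i, (G (α j) : ℂ) := by
      rw [← Finset.mul_prod_erase Finset.univ _ (Finset.mem_univ i)]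
      congr 1
      · simp [Finsupp.add_apply, Finsupp.single_apply, add_comm]
      · refine Finset.prod_congr rfl fun j hj => ?_
        have : ((Finsupp.single i 2 + α) : Fin n →₀ ℕ) j = α j := by
          simp [Finsupp.add_apply, Finsupp.single_apply, (Finset.mem_erase.mp hj).1.symm]
        rw [this]
    have h2 : (∏ j, (G (α j) : ℂ))
        = (G (α i) : ℂ) * ∏ j ∈ Finset.univ.erase i, (G (α j) : ℂ) :=
      (Finset.mul_prod_erase Finset.univ _ (Finset.mem_univ i)).symm
    rw [h1, G_step', h2]
    ring
  rw [Finset.sum_congr rfl (fun i _ => key i), ← Finset.sum_mul, Ig_monomial]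
  have : ∑ i : Fin n, (((α i : ℂ) + 1)/2) = (((∑ i, α i : ℕ) : ℂ) + n)/2 := by
    rw [← Finset.sum_div]
    push_cast
    rw [Finset.sum_add_distrib]
    simp [Finset.card_univ]
  rw [this]


lemma Ig_radSq_homog {g : MvPolynomial (Fin n) ℂ} {d : ℕ} (hg : g.IsHomogeneous d) :
    Ig (radSq n * g) = (((d : ℂ) + n)/2) * Ig g := by
  conv_lhs => rw [g.as_sum]
  rw [Finset.mul_sum, Ig_sum]
  conv_rhs => rw [g.as_sum, Ig_sum]
  rw [Finset.mul_sum]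
  refine Finset.sum_congr rfl fun α hα => ?_
  rw [Ig_radSq_monomial, sum_eq_of_homog hg hα]

lemma radSq_homog : (radSq n).IsHomogeneous 2 := by
  refine IsHomogeneous.sum _ _ _ (fun i _ => ?_)
  simpa using (isHomogeneous_X ℂ i).pow 2

lemma Ig_radSq_pow {g : MvPolynomial (Fin n) ℂ} {d : ℕ} (hg : g.IsHomogeneous d) :
    ∀ j : ℕ, Ig (radSq n ^ j * g)
      = (∏ i ∈ Finset.range j, (((d : ℂ) + 2 * i + n)/2)) * Ig g
  | 0 => by simp
  | (j+1) => by
    have hpow : (radSq n ^ j * g).IsHomogeneous (2 * j + d) := by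
      simpa [mul_comm] using ((radSq_homog (n := n)).pow j).mul hg
    have : radSq n ^ (j+1) * g = radSq n * (radSq n ^ j * g) := by ring
    rw [this, Ig_radSq_homog hpow, Ig_radSq_pow hg j, Finset.prod_range_succ]
    push_cast
    ring

def conjP (f : MvPolynomial (Fin n) ℂ) : MvPolynomial (Fin n) ℂ :=
  MvPolynomial.map (starRingEnd ℂ) f

lemma evalR_conj (f : MvPolynomial (Fin n) ℂ) (x : Fin n → ℝ) :
    evalR (conjP f) x = (starRingEnd ℂ) (evalR f x) := by
  rw [evalR, evalR, conjP, eval_map]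
  have : (starRingEnd ℂ) (eval (fun i => (x i : ℂ)) f)
      = eval₂ ((starRingEnd ℂ).comp (RingHom.id ℂ))
          ((starRingEnd ℂ) ∘ fun i => (x i : ℂ)) f := by
    rw [eval, ← eval₂_comp_left]
    rfl
  rw [this]
  congr 1
  funext z
  simp [Complex.conj_ofReal]

lemma evalR_mul_conj (f : MvPolynomial (Fin n) ℂ) (x : Fin n → ℝ) :
    evalR (f * conjP f) x = ((‖evalR f x‖ ^ 2 : ℝ) : ℂ) := by
  rw [evalR, _root_.map_mul, ← evalR, ← evalR, evalR_conj, Complex.mul_conj, Complex.sq_norm]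

lemma evalR_radSq_pow_mul (j : ℕ) (f : MvPolynomial (Fin n) ℂ) (x : Fin n → ℝ) :
    evalR (radSq n ^ j * (f * conjP f)) x
      = (((∑ i, x i ^ 2) ^ j * ‖evalR f x‖ ^ 2 : ℝ) : ℂ) := by
  rw [evalR, _root_.map_mul, _root_.map_pow, ← evalR, ← evalR, evalR_mul_conj]
  have : evalR (radSq n) x = ((∑ i, x i ^ 2 : ℝ) : ℂ) := by
    rw [evalR, radSq, _root_.map_sum]
    push_cast
    refine Finset.sum_congr rfl fun i _ => ?_
    simp
  rw [this]
  push_cast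
  ring


def Sj (f : MvPolynomial (Fin n) ℂ) (j : ℕ) : ℝ :=
  ∫ x : Fin n → ℝ,
    (∑ i, x i ^ 2) ^ j * ‖evalR f x‖ ^ 2 * Real.exp (-(∑ i, x i ^ 2))

lemma Sj_eq (f : MvPolynomial (Fin n) ℂ) (j : ℕ) :
    (Sj f j : ℂ) = Ig (radSq n ^ j * (f * conjP f)) := by
  rw [Ig, Sj]
  have hcong : ∀ x : Fin n → ℝ,
      evalR (radSq n ^ j * (f * conjP f)) x * (Real.exp (-(∑ i, x i ^ 2)) : ℂ)
      = ((((fun y : Fin n → ℝ => (∑ i, y i ^ 2) ^ j * ‖evalR f y‖ ^ 2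
          * Real.exp (-(∑ i, y i ^ 2))) x) : ℝ) : ℂ) := by
    intro x
    rw [evalR_radSq_pow_mul]
    push_cast
    ring
  rw [integral_congr_ae (Eventually.of_forall hcong)]
  exact integral_ofReal.symm

lemma integrable_Sj (f : MvPolynomial (Fin n) ℂ) (j : ℕ) :
    Integrable (fun x : Fin n → ℝ =>
      (∑ i, x i ^ 2) ^ j * ‖evalR f x‖ ^ 2 * Real.exp (-(∑ i, x i ^ 2))) := by
  have h := (integrable_evalR_exp (radSq n ^ j * (f * conjP f))).re
  refine h.congr (Eventually.of_forall fun x => ?_)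
  simp only [evalR_radSq_pow_mul, ← Complex.ofReal_mul, RCLike.ofReal_re, Complex.ofReal_re]
  exact Complex.ofReal_re _

lemma Sj_nonneg (f : MvPolynomial (Fin n) ℂ) (j : ℕ) : 0 ≤ Sj f j := by
  refine integral_nonneg fun x => ?_
  positivity

lemma Sj_moment (f : MvPolynomial (Fin n) ℂ) {m : ℕ} (hf : f.IsHomogeneous m) (j : ℕ) :
    Sj f j = (∏ i ∈ Finset.range j, ((2 * (m:ℝ) + 2 * i + n)/2)) * Sj f 0 := by
  apply Complex.ofReal_injective
  have hmul : (f * conjP f).IsHomogeneous (m + m) := hf.mul (hf.map _)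
  rw [Complex.ofReal_mul, Sj_eq, Sj_eq, Ig_radSq_pow hmul j]
  have h0 : radSq n ^ 0 * (f * conjP f) = f * conjP f := by ring
  rw [h0]
  congr 1
  rw [Complex.ofReal_prod]
  refine Finset.prod_congr rfl fun i _ => ?_
  push_cast
  ring

lemma eval_smul_homog {φ : MvPolynomial (Fin n) ℂ} {d : ℕ} (hφ : φ.IsHomogeneous d)
    (c : ℂ) (v : Fin n → ℂ) :
    MvPolynomial.eval (fun i => c * v i) φ = c ^ d * MvPolynomial.eval v φ := by
  rw [eval_eq', eval_eq', Finset.mul_sum]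
  refine Finset.sum_congr rfl fun α hα => ?_
  have hs : ∑ i, α i = d := sum_eq_of_homog hφ hα
  simp_rw [mul_pow]
  rw [Finset.prod_mul_distrib, Finset.prod_pow_eq_pow_sum, hs]
  ring



lemma Ii_prod (b : ℕ) : ∀ j : ℕ,
    Ii (b + 2 * j) = (∏ i ∈ Finset.range j, (((b:ℝ) + 2 * i + 1)/2)) * Ii b
  | 0 => by simp
  | (j+1) => by
    have h : b + 2 * (j+1) = (b + 2 * j) + 2 := by ring
    rw [h, Ii_step, Ii_prod b j, Finset.prod_range_succ]
    push_cast
    ring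

lemma pointwise_bound {k : ℕ} (hk : 0 < k) {P f : MvPolynomial (Fin n) ℂ}
    (hP : P.IsHomogeneous k) {M : ℝ}
    (hM : ∀ θ : Fin n → ℝ, (∑ i, θ i ^ 2) = 1 → ‖evalR P θ‖ ≤ M)
    (x : Fin n → ℝ) :
    ‖evalR (P * f) x‖ ^ 2
      ≤ M ^ 2 * ((∑ i, x i ^ 2) ^ k * ‖evalR f x‖ ^ 2) := by
  have habs : ‖evalR P x‖ ≤ M * Real.sqrt (∑ i, x i ^ 2) ^ k := by
    by_cases hr : (∑ i, x i ^ 2) = 0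
    · have hx : ∀ i : Fin n, x i = 0 := by
        intro i
        have := (Finset.sum_eq_zero_iff_of_nonneg
          (fun j _ => sq_nonneg (x j))).mp hr i (Finset.mem_univ i)
        exact pow_eq_zero_iff two_ne_zero |>.mp this
      have hP0 : evalR P x = 0 := by
        rw [evalR]
        have hfun : (fun i => ((x i : ℝ) : ℂ)) = (fun _ => 0 : Fin n → ℂ) :=
          funext fun i => by rw [hx i]; simp
        rw [hfun, eval_zero']
        exact hP.coeff_eq_zero (by simpa [map_zero] using hk.ne)
      rw [hP0, hr]
      simp [Real.sqrt_zero, zero_pow hk.ne']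
    · have hrpos : 0 < ∑ i, x i ^ 2 := lt_of_le_of_ne (by positivity) (Ne.symm hr)
      set r := Real.sqrt (∑ i, x i ^ 2) with hrdef
      have hr0 : 0 < r := Real.sqrt_pos.mpr hrpos
      have hr2 : r ^ 2 = ∑ i, x i ^ 2 := Real.sq_sqrt hrpos.le
      have hθ : (∑ i, (x i / r) ^ 2) = 1 := by
        simp only [div_pow, ← Finset.sum_div, hr2.symm]
        field_simp
      have hev : evalR P x = (r : ℂ) ^ k * evalR P (fun i => x i / r) := by
        rw [evalR, evalR]
        have hfun : (fun i => ((x i : ℝ) : ℂ))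
            = fun i => (r : ℂ) * ((x i / r : ℝ) : ℂ) := by
          funext i
          push_cast
          have hrne : (r : ℂ) ≠ 0 := Complex.ofReal_ne_zero.mpr hr0.ne'
          rw [mul_div_cancel₀ _ hrne]
        rw [hfun, eval_smul_homog hP]
      rw [hev]
      rw [norm_mul, norm_pow]
      have h1 : ‖(r : ℂ)‖ = r := by
        rw [Complex.norm_of_nonneg hr0.le]
      rw [h1, mul_comm]
      exact mul_le_mul_of_nonneg_right (hM _ hθ) (by positivity)
  have hsplit : ‖evalR (P * f) x‖
      = ‖evalR P x‖ * ‖evalR f x‖ := by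
    rw [evalR, _root_.map_mul, norm_mul]
    rfl
  have := mul_le_mul_of_nonneg_right habs (norm_nonneg (evalR f x))
  have h2 := pow_le_pow_left₀ (by positivity) this 2
  calc ‖evalR (P * f) x‖ ^ 2
      = (‖evalR P x‖ * ‖evalR f x‖) ^ 2 := by rw [hsplit]
    _ ≤ (M * Real.sqrt (∑ i, x i ^ 2) ^ k * ‖evalR f x‖) ^ 2 := h2
    _ = M ^ 2 * ((∑ i, x i ^ 2) ^ k * ‖evalR f x‖ ^ 2) := by
        rw [mul_pow, mul_pow, ← pow_mul, mul_comm k 2, pow_mul,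
          Real.sq_sqrt (by positivity : (0:ℝ) ≤ ∑ i, x i ^ 2)]
        ring

lemma rFNorm_eq_sqrt_Sj {n : ℕ} (g : MvPolynomial (Fin n) ℂ) :
    rFNorm g = Real.sqrt (Sj g 0) := by
  rw [rFNorm, Sj]
  congr 1
  refine integral_congr_ae (Eventually.of_forall fun x => ?_)
  simp

lemma rFNorm_nonneg' {n : ℕ} (g : MvPolynomial (Fin n) ℂ) : 0 ≤ rFNorm g := by
  rw [rFNorm]; exact Real.sqrt_nonneg _

lemma main_est {n k : ℕ} (hk : 0 < k) {P : MvPolynomial (Fin n) ℂ}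
    (hP : P.IsHomogeneous k) {M : ℝ} (hM0 : 0 ≤ M)
    (hM : ∀ θ : Fin n → ℝ, (∑ i, θ i ^ 2) = 1 → ‖evalR P θ‖ ≤ M)
    (m : ℕ) (f : MvPolynomial (Fin n) ℂ) (hf : f.IsHomogeneous m) :
    rFNorm (P * f) ≤
      M * Real.sqrt (∏ i ∈ Finset.range k, ((2 * (m:ℝ) + 2 * i + n)/2)) * rFNorm f := by
  set c : ℝ := ∏ i ∈ Finset.range k, ((2 * (m:ℝ) + 2 * i + n)/2) with hc
  have hc0 : 0 ≤ c := Finset.prod_nonneg fun i _ => by positivity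
  have h1 : Sj (P * f) 0 ≤ M ^ 2 * (c * Sj f 0) := by
    have hpt : ∀ x : Fin n → ℝ,
        (∑ i, x i ^ 2) ^ 0 * ‖evalR (P * f) x‖ ^ 2
          * Real.exp (-(∑ i, x i ^ 2))
        ≤ M ^ 2 * ((∑ i, x i ^ 2) ^ k * ‖evalR f x‖ ^ 2
          * Real.exp (-(∑ i, x i ^ 2))) := by
      intro x
      have h := mul_le_mul_of_nonneg_right (pointwise_bound (f := f) hk hP hM x)
        (Real.exp_nonneg (-(∑ i, x i ^ 2)))
      calc (∑ i, x i ^ 2) ^ 0 * ‖evalR (P * f) x‖ ^ 2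
            * Real.exp (-(∑ i, x i ^ 2))
          = ‖evalR (P * f) x‖ ^ 2 * Real.exp (-(∑ i, x i ^ 2)) := by ring
        _ ≤ M ^ 2 * ((∑ i, x i ^ 2) ^ k * ‖evalR f x‖ ^ 2)
            * Real.exp (-(∑ i, x i ^ 2)) := h
        _ = M ^ 2 * ((∑ i, x i ^ 2) ^ k * ‖evalR f x‖ ^ 2
            * Real.exp (-(∑ i, x i ^ 2))) := by ring
    calc Sj (P * f) 0
        ≤ ∫ x : Fin n → ℝ, M ^ 2 * ((∑ i, x i ^ 2) ^ k * ‖evalR f x‖ ^ 2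
            * Real.exp (-(∑ i, x i ^ 2))) :=
          integral_mono (integrable_Sj (P * f) 0) ((integrable_Sj f k).const_mul _) hpt
      _ = M ^ 2 * Sj f k := by rw [integral_const_mul]; rfl
      _ = M ^ 2 * (c * Sj f 0) := by rw [Sj_moment f hf k]
  rw [rFNorm_eq_sqrt_Sj, rFNorm_eq_sqrt_Sj]
  refine le_trans (Real.sqrt_le_sqrt h1) (le_of_eq ?_)
  rw [Real.sqrt_mul (by positivity : (0:ℝ) ≤ M ^ 2), Real.sqrt_mul hc0,
    Real.sqrt_sq hM0]
  ring

lemma ratio_eq {n : ℕ} (hn : 0 < n) (m k : ℕ) :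
    Ii (2 * m + 2 * k + n - 1) / Ii (2 * m + n - 1)
      = ∏ i ∈ Finset.range k, ((2 * (m:ℝ) + 2 * i + n)/2) := by
  have h : 2 * m + 2 * k + n - 1 = (2 * m + n - 1) + 2 * k := by omega
  rw [h, Ii_prod, mul_div_assoc, div_self (Ii_pos _).ne', mul_one]
  refine Finset.prod_congr rfl fun i _ => ?_
  have hcast : ((2 * m + n - 1 : ℕ) : ℝ) = 2 * (m:ℝ) + n - 1 := by
    have : (1:ℕ) ≤ 2 * m + n := by omega
    push_cast [Nat.cast_sub this]
    ring
  rw [hcast]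
  ring

end StmtAux

/-- Proposition `Pest`, real case: for a homogeneous polynomial `P_k` of
degree `k` and `M_ℝ = max_{θ ∈ S^{n-1}} |P_k(θ)|`, one has
`‖P_k f_m‖_rF ≤ M_ℝ √(I_{2m+2k+n-1}/I_{2m+n-1}) ‖f_m‖_rF`, and there is `D_{k,n} > 0` with
`‖P_k f_m‖_rF ≤ D_{k,n} M_ℝ √((1+m)^k) ‖f_m‖_rF`. -/
theorem stmt_6 (n k : ℕ) (hn : 0 < n) (hk : 0 < k)
    (P : MvPolynomial (Fin n) ℂ) (hPhom : P.IsHomogeneous k)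
    (M : ℝ)
    (hM : IsGreatest
      {y : ℝ | ∃ θ : Fin n → ℝ, (∑ i, θ i ^ 2) = 1 ∧ y = ‖evalR P θ‖} M) :
    (∀ (m : ℕ) (f : MvPolynomial (Fin n) ℂ), f.IsHomogeneous m →
      rFNorm (P * f) ≤
        M * Real.sqrt (Ii (2 * m + 2 * k + n - 1) / Ii (2 * m + n - 1)) * rFNorm f) ∧
    ∃ D : ℝ, 0 < D ∧ ∀ (m : ℕ) (f : MvPolynomial (Fin n) ℂ), f.IsHomogeneous m →
      rFNorm (P * f) ≤ D * M * Real.sqrt (((1 : ℝ) + m) ^ k) * rFNorm f := by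
  obtain ⟨θ₀, hθ₀, hMval⟩ := hM.1
  have hM0 : 0 ≤ M := by rw [hMval]; exact norm_nonneg _
  have hMb : ∀ θ : Fin n → ℝ, (∑ i, θ i ^ 2) = 1 → ‖evalR P θ‖ ≤ M :=
    fun θ hθ => hM.2 ⟨θ, hθ, rfl⟩
  constructor
  · intro m f hf
    rw [ratio_eq hn m k]
    exact main_est hk hPhom hM0 hMb m f hf
  · refine ⟨Real.sqrt (∏ i ∈ Finset.range k, (((n:ℝ) + 2 * i + 2)/2)), ?_, ?_⟩
    · apply Real.sqrt_pos.mpr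
      exact Finset.prod_pos fun i _ => by positivity
    · intro m f hf
      have h1 := main_est hk hPhom hM0 hMb m f hf
      refine le_trans h1 ?_
      have hprodle : (∏ i ∈ Finset.range k, ((2 * (m:ℝ) + 2 * i + n)/2))
          ≤ ((1:ℝ) + m) ^ k * ∏ i ∈ Finset.range k, (((n:ℝ) + 2 * i + 2)/2) := by
        have hpc : ((1:ℝ) + m) ^ k = ∏ _i ∈ Finset.range k, ((1:ℝ) + m) := by
          rw [Finset.prod_const, Finset.card_range]
        rw [hpc, ← Finset.prod_mul_distrib]
        refine Finset.prod_le_prod (fun i _ => by positivity) (fun i _ => ?_)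
        have hn1 : (1:ℝ) ≤ n := by exact_mod_cast hn
        have him : (0:ℝ) ≤ i := Nat.cast_nonneg i
        have hm : (0:ℝ) ≤ m := Nat.cast_nonneg m
        rw [div_le_iff₀ (by norm_num : (0:ℝ) < 2)] at *
        nlinarith
      have hsq : Real.sqrt (∏ i ∈ Finset.range k, ((2 * (m:ℝ) + 2 * i + n)/2))
          ≤ Real.sqrt (((1:ℝ) + m) ^ k)
            * Real.sqrt (∏ i ∈ Finset.range k, (((n:ℝ) + 2 * i + 2)/2)) := by
        rw [← Real.sqrt_mul (by positivity)]
        exact Real.sqrt_le_sqrt hprodle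
      calc M * Real.sqrt (∏ i ∈ Finset.range k, ((2 * (m:ℝ) + 2 * i + n)/2)) * rFNorm f
          ≤ M * (Real.sqrt (((1:ℝ) + m) ^ k)
              * Real.sqrt (∏ i ∈ Finset.range k, (((n:ℝ) + 2 * i + 2)/2))) * rFNorm f := by
            refine mul_le_mul_of_nonneg_right
              (mul_le_mul_of_nonneg_left hsq hM0) (rFNorm_nonneg' f)
        _ = Real.sqrt (∏ i ∈ Finset.range k, (((n:ℝ) + 2 * i + 2)/2)) * M
            * Real.sqrt (((1:ℝ) + m) ^ k) * rFNorm f := by ring
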